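/- arXiv:0711.2403 — 4 statements merged into one kernel-verified Lean document; each statement's English description precedes it below -/
import Mathlib

section
/- The coefficient σ(t) = sin(t^α)/(1+t) with 0 < α < 1 satisfies the generalised zero mean condition: sup_t |∫₀ᵗ sin(s^α)/(1+s) ds| < ∞. -/
open Real MeasureTheory intervalIntegral Set

lemma srzm_contOn (α : ℝ) (hα0 : 0 < α) :
    ContinuousOn (fun s : ℝ => Real.sin (s ^ α) / (1 + s)) (Set.Ici 0) := by
  apply ContinuousOn.div
  · exact Real.continuous_sin.comp_continuousOn
      (fun s _ => (Real.continuousAt_rpow_const s α (Or.inr hα0.le)).continuousWithinAt)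
  · exact (continuous_const.add continuous_id).continuousOn
  · intro s hs
    have : (0:ℝ) ≤ s := hs
    positivity

lemma srzm_head (α t : ℝ) (ht0 : 0 ≤ t) (ht1 : t ≤ 1) :
    |∫ s in (0:ℝ)..t, Real.sin (s ^ α) / (1 + s)| ≤ 1 := by
  have h : ∀ x ∈ Set.uIoc (0:ℝ) t, ‖Real.sin (x ^ α) / (1 + x)‖ ≤ 1 := by
    intro x hx
    have hx0 : (0:ℝ) < x := by
      rw [Set.uIoc_of_le ht0] at hx; exact hx.1
    rw [Real.norm_eq_abs, abs_div, abs_of_nonneg (by linarith : (0:ℝ) ≤ 1 + x),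
      div_le_one (by linarith)]
    calc |Real.sin (x ^ α)| ≤ 1 := Real.abs_sin_le_one _
      _ ≤ 1 + x := by linarith
  calc |∫ s in (0:ℝ)..t, Real.sin (s ^ α) / (1 + s)| ≤ 1 * |t - 0| :=
        intervalIntegral.norm_integral_le_of_norm_le_const h
    _ = t := by rw [one_mul, sub_zero, abs_of_nonneg ht0]
    _ ≤ 1 := ht1

lemma srzm_tail (α : ℝ) (hα0 : 0 < α) (hα1 : α < 1) (t : ℝ) (ht : 1 ≤ t) :
    |∫ s in (1:ℝ)..t, Real.sin (s ^ α) / (1 + s)| ≤ 2/α + (2-α)/α^2 := by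
  set u : ℝ → ℝ := fun s => α⁻¹ * (s ^ (1-α) / (1+s)) with hu_def
  set u' : ℝ → ℝ :=
    fun s => α⁻¹ * (((1-α) * s ^ (-α) * (1+s) - s ^ (1-α) * 1) / (1+s)^2) with hu'_def
  set v : ℝ → ℝ := fun s => Real.cos (s ^ α) with hv_def
  set v' : ℝ → ℝ := fun s => -(Real.sin (s ^ α) * (α * s ^ (α - 1))) with hv'_def
  have huIcc : Set.uIcc (1:ℝ) t = Set.Icc 1 t := Set.uIcc_of_le ht
  have hpos : ∀ x ∈ Set.uIcc (1:ℝ) t, (0:ℝ) < x := by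
    rw [huIcc]; intro x hx; linarith [hx.1]
  -- derivatives
  have hu : ∀ x ∈ Set.uIcc (1:ℝ) t, HasDerivAt u (u' x) x := by
    intro x hx
    have hx0 : x ≠ 0 := (hpos x hx).ne'
    have h1 : HasDerivAt (fun s : ℝ => s ^ (1-α)) ((1-α) * x ^ (-α)) x := by
      have := Real.hasDerivAt_rpow_const (x := x) (p := 1-α) (Or.inl hx0)
      have he : (1:ℝ) - α - 1 = -α := by ring
      rwa [he] at this
    have h2 : HasDerivAt (fun s : ℝ => 1 + s) 1 x := by
      simpa using (hasDerivAt_id x).const_add (1:ℝ)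
    have h20 : (1:ℝ) + x ≠ 0 := by
      have := hpos x hx; intro hc; linarith
    exact ((h1.div h2 h20).const_mul α⁻¹)
  have hv : ∀ x ∈ Set.uIcc (1:ℝ) t, HasDerivAt v (v' x) x := by
    intro x hx
    have hx0 : x ≠ 0 := (hpos x hx).ne'
    have h1 : HasDerivAt (fun s : ℝ => s ^ α) (α * x ^ (α-1)) x :=
      Real.hasDerivAt_rpow_const (Or.inl hx0)
    have := (Real.hasDerivAt_cos (x ^ α)).comp x h1; rw [neg_mul] at this; exact this
  -- continuity helpers
  have hrp : ∀ p : ℝ, ContinuousOn (fun s : ℝ => s ^ p) (Set.Icc (1:ℝ) t) := by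
    intro p x hx
    exact (Real.continuousAt_rpow_const x p
      (Or.inl (by intro hc; rw [hc] at hx; linarith [hx.1] : x ≠ 0))).continuousWithinAt
  have hden : ∀ x ∈ Set.Icc (1:ℝ) t, (1:ℝ) + x ≠ 0 := by
    intro x hx; have := hx.1; intro hc; linarith
  have hu'cont : ContinuousOn u' (Set.Icc (1:ℝ) t) := by
    apply ContinuousOn.mul continuousOn_const
    apply ContinuousOn.div
    · exact ((continuousOn_const.mul (hrp (-α))).mul
        ((continuous_const.add continuous_id).continuousOn)).sub
        ((hrp (1-α)).mul continuousOn_const)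
    · exact ((continuous_const.add continuous_id).pow 2).continuousOn
    · intro x hx; exact pow_ne_zero 2 (hden x hx)
  have hv'cont : ContinuousOn v' (Set.Icc (1:ℝ) t) := by
    exact ((Real.continuous_sin.comp_continuousOn (hrp α)).mul
      (continuousOn_const.mul (hrp (α-1)))).neg
  have hu'int : IntervalIntegrable u' volume 1 t :=
    (hu'cont.mono (by rw [huIcc])).intervalIntegrable
  have hv'int : IntervalIntegrable v' volume 1 t :=
    (hv'cont.mono (by rw [huIcc])).intervalIntegrable
  -- integration by parts
  have key := integral_mul_deriv_eq_deriv_mul hu hv hu'int hv'int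
  -- the integrand equals -(u x * v' x)
  have heq : ∀ x ∈ Set.uIcc (1:ℝ) t,
      Real.sin (x ^ α) / (1 + x) = -(u x * v' x) := by
    intro x hx
    have hx0 : (0:ℝ) < x := hpos x hx
    have hid : x ^ (1-α) * x ^ (α-1) = 1 := by
      rw [← Real.rpow_add hx0]
      norm_num
    have hcalc : u x * v' x
        = -(Real.sin (x ^ α) / (1 + x)) * (α⁻¹ * α) * (x ^ (1-α) * x ^ (α-1)) := by
      simp only [hu_def, hv'_def]; ring
    rw [hcalc, hid, inv_mul_cancel₀ hα0.ne']; ring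
  have hintf : ∫ s in (1:ℝ)..t, Real.sin (s ^ α) / (1 + s)
      = u 1 * v 1 - u t * v t + ∫ s in (1:ℝ)..t, u' s * v s := by
    have h1 : ∫ s in (1:ℝ)..t, Real.sin (s ^ α) / (1 + s)
        = -∫ s in (1:ℝ)..t, u s * v' s := by
      rw [← intervalIntegral.integral_neg]
      exact intervalIntegral.integral_congr heq
    rw [h1, key]; ring
  -- bound |u x| for x ≥ 1
  have hub : ∀ x : ℝ, 1 ≤ x → |u x| ≤ α⁻¹ := by
    intro x hx
    have hx0 : (0:ℝ) < x := by linarith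
    have h1 : x ^ (1-α) ≤ x := by
      calc x ^ (1-α) ≤ x ^ (1:ℝ) :=
            Real.rpow_le_rpow_of_exponent_le hx (by linarith)
        _ = x := Real.rpow_one x
    have h2 : (0:ℝ) < 1 + x := by linarith
    have h3 : x ^ (1-α) / (1+x) ≤ 1 := by
      rw [div_le_one h2]
      calc x ^ (1-α) ≤ x := h1
        _ ≤ 1 + x := by linarith
    have h4 : (0:ℝ) ≤ x ^ (1-α) / (1+x) := by positivity
    have heq4 : |u x| = α⁻¹ * (x ^ (1-α) / (1+x)) := by
      rw [hu_def]
      rw [abs_mul, abs_of_nonneg (by positivity : (0:ℝ) ≤ α⁻¹), abs_of_nonneg h4]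
    rw [heq4]
    calc α⁻¹ * (x ^ (1-α) / (1+x)) ≤ α⁻¹ * 1 :=
          mul_le_mul_of_nonneg_left h3 (by positivity)
      _ = α⁻¹ := mul_one _
  -- bound the remaining integral
  have hgint : IntervalIntegrable (fun x : ℝ => α⁻¹ * (2-α) * x ^ (-α-1)) volume 1 t := by
    apply ContinuousOn.intervalIntegrable
    rw [huIcc]
    exact continuousOn_const.mul (hrp (-α-1))
  have hbound : ∀ᵐ x ∂(volume.restrict (Set.uIoc (1:ℝ) t)),
      ‖u' x * v x‖ ≤ α⁻¹ * (2-α) * x ^ (-α-1) := by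
    apply (ae_restrict_iff' measurableSet_uIoc).mpr
    apply Filter.Eventually.of_forall
    intro x hx
    have hx1 : (1:ℝ) ≤ x := by
      rcases Set.mem_uIoc.mp hx with h | h
      · exact h.1.le
      · linarith [h.1, h.2]
    have hx0 : (0:ℝ) < x := by linarith
    set A := x ^ (-α-1) with hA_def
    have hA : (0:ℝ) < A := Real.rpow_pos_of_pos hx0 _
    have e1 : x ^ (-α) = A * x := by
      rw [hA_def]
      calc x ^ (-α) = x ^ (-α-1+1) := by norm_num
        _ = x ^ (-α-1) * x ^ (1:ℝ) := Real.rpow_add hx0 _ _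
        _ = x ^ (-α-1) * x := by rw [Real.rpow_one]
    have e2 : x ^ (1-α) = A * x ^ 2 := by
      rw [hA_def, ← Real.rpow_natCast x 2, ← Real.rpow_add hx0]
      congr 1
      push_cast
      ring
    have h2 : (0:ℝ) < 1 + x := by linarith
    have hvb : |v x| ≤ 1 := Real.abs_cos_le_one _
    have hra : (0:ℝ) < x ^ (-α) := Real.rpow_pos_of_pos hx0 _
    have hrb : (0:ℝ) < x ^ (1-α) := Real.rpow_pos_of_pos hx0 _
    have hnum : |((1-α) * x ^ (-α) * (1+x) - x ^ (1-α) * 1)|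
        ≤ (1-α) * x ^ (-α) * (1+x) + x ^ (1-α) := by
      have ha : (0:ℝ) ≤ (1-α) * x ^ (-α) * (1+x) :=
        mul_nonneg (mul_nonneg (by linarith) hra.le) h2.le
      calc |((1-α) * x ^ (-α) * (1+x) - x ^ (1-α) * 1)|
          ≤ |(1-α) * x ^ (-α) * (1+x)| + |x ^ (1-α) * 1| := abs_sub _ _
        _ = (1-α) * x ^ (-α) * (1+x) + x ^ (1-α) := by
            rw [abs_of_nonneg ha, mul_one, abs_of_nonneg hrb.le]
    have hfrac : ((1-α) * x ^ (-α) * (1+x) + x ^ (1-α)) / (1+x)^2 ≤ (2-α) * A := by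
      rw [div_le_iff₀ (by positivity)]
      rw [e1, e2]
      nlinarith [mul_pos hA hx0, mul_pos (mul_pos hA hx0) hx0, hA.le]
    calc ‖u' x * v x‖ = |u' x| * |v x| := abs_mul _ _
      _ ≤ |u' x| * 1 := mul_le_mul_of_nonneg_left hvb (abs_nonneg _)
      _ = |u' x| := mul_one _
      _ = α⁻¹ * (|((1-α) * x ^ (-α) * (1+x) - x ^ (1-α) * 1)| / (1+x)^2) := by
          rw [hu'_def]
          rw [abs_mul, abs_of_nonneg (by positivity : (0:ℝ) ≤ α⁻¹), abs_div,
            abs_of_nonneg (by positivity : (0:ℝ) ≤ ((1:ℝ)+x)^2)]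
      _ ≤ α⁻¹ * (((1-α) * x ^ (-α) * (1+x) + x ^ (1-α)) / (1+x)^2) := by
          gcongr
      _ ≤ α⁻¹ * ((2-α) * A) := mul_le_mul_of_nonneg_left hfrac (by positivity)
      _ = α⁻¹ * (2-α) * A := by ring
  have hIbound : |∫ s in (1:ℝ)..t, u' s * v s| ≤ (2-α)/α^2 := by
    have h1 : ‖∫ s in (1:ℝ)..t, u' s * v s‖
        ≤ |∫ x in (1:ℝ)..t, α⁻¹ * (2-α) * x ^ (-α-1)| :=
      intervalIntegral.norm_integral_le_abs_of_norm_le hbound hgint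
    have h0mem : (0:ℝ) ∉ Set.uIcc (1:ℝ) t := by
      rw [huIcc]; intro h; exact absurd h.1 (by norm_num)
    have hrne : -α - 1 ≠ -1 := by intro h; apply hα0.ne'; linarith
    have h2 : ∫ x in (1:ℝ)..t, α⁻¹ * (2-α) * x ^ (-α-1)
        = α⁻¹ * (2-α) * ((t ^ (-α) - 1) / (-α)) := by
      rw [intervalIntegral.integral_const_mul, integral_rpow (Or.inr ⟨hrne, h0mem⟩)]
      have hr : -α - 1 + 1 = -α := by ring
      rw [hr, Real.one_rpow]
    have htp0 : (0:ℝ) ≤ t ^ (-α) := (Real.rpow_pos_of_pos (by linarith) _).le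
    have htp1 : t ^ (-α) ≤ 1 := Real.rpow_le_one_of_one_le_of_nonpos ht (by linarith)
    have hval : α⁻¹ * (2-α) * ((t ^ (-α) - 1) / (-α)) = (2-α)/α^2 * (1 - t ^ (-α)) := by
      field_simp
      ring
    have hcoef : (0:ℝ) ≤ (2-α)/α^2 := div_nonneg (by linarith) (sq_nonneg α)
    rw [Real.norm_eq_abs] at h1
    calc |∫ s in (1:ℝ)..t, u' s * v s|
        ≤ |α⁻¹ * (2-α) * ((t ^ (-α) - 1) / (-α))| := by rw [← h2]; exact h1
      _ = (2-α)/α^2 * (1 - t ^ (-α)) := by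
          rw [hval, abs_of_nonneg (mul_nonneg hcoef (by linarith))]
      _ ≤ (2-α)/α^2 * 1 := mul_le_mul_of_nonneg_left (by linarith) hcoef
      _ = (2-α)/α^2 := mul_one _
  -- combine
  have hb1 : |u 1 * v 1| ≤ α⁻¹ := by
    calc |u 1 * v 1| = |u 1| * |v 1| := abs_mul _ _
      _ ≤ α⁻¹ * 1 := mul_le_mul (hub 1 le_rfl) (Real.abs_cos_le_one _)
          (abs_nonneg _) (by positivity)
      _ = α⁻¹ := mul_one _
  have hbt : |u t * v t| ≤ α⁻¹ := by
    calc |u t * v t| = |u t| * |v t| := abs_mul _ _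
      _ ≤ α⁻¹ * 1 := mul_le_mul (hub t ht) (Real.abs_cos_le_one _)
          (abs_nonneg _) (by positivity)
      _ = α⁻¹ := mul_one _
  rw [hintf]
  have habs : |u 1 * v 1 - u t * v t + ∫ s in (1:ℝ)..t, u' s * v s|
      ≤ |u 1 * v 1| + |u t * v t| + |∫ s in (1:ℝ)..t, u' s * v s| := by
    calc |u 1 * v 1 - u t * v t + ∫ s in (1:ℝ)..t, u' s * v s|
        ≤ |u 1 * v 1 - u t * v t| + |∫ s in (1:ℝ)..t, u' s * v s| := abs_add_le _ _
      _ ≤ |u 1 * v 1| + |u t * v t| + |∫ s in (1:ℝ)..t, u' s * v s| := by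
          have := abs_sub (u 1 * v 1) (u t * v t)
          linarith
  have h2a : 2/α = α⁻¹ + α⁻¹ := by
    rw [div_eq_mul_inv]; ring
  rw [h2a]
  linarith

theorem sin_rpow_zero_mean (α : ℝ) (hα0 : 0 < α) (hα1 : α < 1) :
    ∃ K : ℝ, ∀ t : ℝ, 0 ≤ t →
      |∫ s in (0:ℝ)..t, Real.sin (s ^ α) / (1 + s)| ≤ K := by
  refine ⟨1 + (2/α + (2-α)/α^2), ?_⟩
  have hnn : (0:ℝ) ≤ 2/α + (2-α)/α^2 := by
    have h1 : (0:ℝ) ≤ 2/α := by positivity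
    have h2 : (0:ℝ) ≤ (2-α)/α^2 := div_nonneg (by linarith) (sq_nonneg α)
    linarith
  intro t ht
  rcases le_or_gt t 1 with h | h
  · linarith [srzm_head α t ht h]
  · have hfint : ∀ a b : ℝ, 0 ≤ a → 0 ≤ b →
        IntervalIntegrable (fun s => Real.sin (s ^ α) / (1 + s)) volume a b := by
      intro a b ha hb
      exact ((srzm_contOn α hα0).mono
        (fun x hx => le_trans (le_min ha hb) hx.1)).intervalIntegrable
    have hsplit := integral_add_adjacent_intervals (μ := volume)
      (f := fun s => Real.sin (s ^ α) / (1 + s))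
      (hfint 0 1 le_rfl zero_le_one) (hfint 1 t zero_le_one ht)
    rw [← hsplit]
    calc |(∫ s in (0:ℝ)..1, Real.sin (s ^ α) / (1 + s))
          + ∫ s in (1:ℝ)..t, Real.sin (s ^ α) / (1 + s)|
        ≤ |∫ s in (0:ℝ)..1, Real.sin (s ^ α) / (1 + s)|
          + |∫ s in (1:ℝ)..t, Real.sin (s ^ α) / (1 + s)| := abs_add_le _ _
      _ ≤ 1 + (2/α + (2-α)/α^2) :=
          add_le_add (srzm_head α 1 zero_le_one le_rfl) (srzm_tail α hα0 hα1 t h.le)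
end

section
/- For 0 < α < 1, the improper integral ∫₀^∞ sin(s^α)/(1+s) ds converges, and the tail satisfies |∫_θ^∞ sin(s^α)/(1+s) ds| ≲ θ^{-α} for θ ≥ 1. -/
open Real MeasureTheory Filter Set intervalIntegral
open scoped Interval

noncomputable def sphi (α s : ℝ) : ℝ := s ^ (1 - α) / (α * (1 + s))
noncomputable def spsi (α s : ℝ) : ℝ :=
  ((1 - α) * s ^ (-α) * (1 + s) - s ^ (1 - α)) / (α * (1 + s) ^ 2)

lemma hasDerivAt_sphi {α : ℝ} (hα0 : 0 < α) {s : ℝ} (hs : 0 < s) :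
    HasDerivAt (sphi α) (spsi α s) s := by
  have hnum : HasDerivAt (fun s : ℝ => s ^ (1 - α)) ((1 - α) * s ^ (-α)) s := by
    have := Real.hasDerivAt_rpow_const (x := s) (p := 1 - α) (Or.inl hs.ne')
    simpa [sub_sub_cancel_left] using this
  have hden : HasDerivAt (fun s : ℝ => α * (1 + s)) α s := by
    simpa using ((hasDerivAt_id s).const_add 1).const_mul α
  have hd : α * (1 + s) ≠ 0 := by positivity
  have := hnum.div hden hd
  refine this.congr_deriv ?_
  unfold spsi
  field_simp

lemma f_contOn {α : ℝ} (hα0 : 0 < α) :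
    ContinuousOn (fun s : ℝ => Real.sin (s ^ α) / (1 + s)) (Ici 0) := by
  apply ContinuousOn.div
  · exact Real.continuous_sin.comp_continuousOn
      (fun x _ => (Real.continuousAt_rpow_const x α (Or.inr hα0.le)).continuousWithinAt)
  · exact (continuous_const.add continuous_id).continuousOn
  · intro x hx
    have : (0:ℝ) ≤ x := hx
    positivity

lemma g_contOn {α : ℝ} (hα0 : 0 < α) :
    ContinuousOn (fun s : ℝ => Real.cos (s ^ α) * spsi α s) (Ici 1) := by
  have hr : ∀ p : ℝ, ContinuousOn (fun s : ℝ => s ^ p) (Ici (1:ℝ)) := fun p x hx =>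
    (Real.continuousAt_rpow_const x p (Or.inl (ne_of_gt (lt_of_lt_of_le zero_lt_one hx)))).continuousWithinAt
  apply ContinuousOn.mul
  · exact Real.continuous_cos.comp_continuousOn (fun x hx =>
      (Real.continuousAt_rpow_const x α (Or.inr hα0.le)).continuousWithinAt)
  · unfold spsi
    apply ContinuousOn.div
    · exact (((hr (-α)).const_smul (1-α)).mul
        ((continuous_const.add continuous_id).continuousOn)).sub (hr (1-α))
    · exact ((continuous_const.mul ((continuous_const.add continuous_id).pow 2))).continuousOn
    · intro x hx
      have h1 : (1:ℝ) ≤ x := hx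
      positivity

lemma spsi_bound {α : ℝ} (hα0 : 0 < α) (hα1 : α < 1) {s : ℝ} (hs : 1 ≤ s) :
    |spsi α s| ≤ s ^ (-α - 1) / α := by
  have hs0 : (0:ℝ) < s := lt_of_lt_of_le zero_lt_one hs
  have key : spsi α s = s ^ (-α) * (1 - α - α * s) / (α * (1 + s) ^ 2) := by
    unfold spsi
    have : s ^ (1 - α) = s ^ (-α) * s := by
      rw [← Real.rpow_add_one hs0.ne']; ring_nf
    rw [this]; ring_nf
  rw [key, abs_div, abs_mul]
  have h1 : |s ^ (-α)| = s ^ (-α) := abs_of_nonneg (Real.rpow_nonneg hs0.le _)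
  have h2 : |1 - α - α * s| ≤ 1 + s := by
    rw [abs_le]
    constructor <;> nlinarith
  have h3 : |α * (1 + s) ^ 2| = α * (1 + s) ^ 2 := abs_of_nonneg (by positivity)
  rw [h1, h3]
  have hmain : s ^ (-α) * |1 - α - α * s| ≤ s ^ (-α) * (1 + s) :=
    mul_le_mul_of_nonneg_left h2 (Real.rpow_nonneg hs0.le _)
  have hstep : s ^ (-α) * (1 + s) / (α * (1 + s) ^ 2) = s ^ (-α) / (α * (1 + s)) := by
    field_simp
  calc s ^ (-α) * |1 - α - α * s| / (α * (1 + s) ^ 2)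
      ≤ s ^ (-α) * (1 + s) / (α * (1 + s) ^ 2) := by
        apply div_le_div_of_nonneg_right hmain (by positivity) |>.trans_eq rfl
    _ = s ^ (-α) / (α * (1 + s)) := hstep
    _ ≤ s ^ (-α) / (α * s) := by
        apply div_le_div_of_nonneg_left (Real.rpow_nonneg hs0.le _) (by positivity)
        nlinarith
    _ = s ^ (-α - 1) / α := by
        rw [Real.rpow_sub hs0, Real.rpow_one]
        field_simp

lemma g_int {α : ℝ} (hα0 : 0 < α) (hα1 : α < 1) {θ : ℝ} (hθ : 1 ≤ θ) :
    IntegrableOn (fun s : ℝ => Real.cos (s ^ α) * spsi α s) (Ioi θ) := by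
  have hθ0 : (0:ℝ) < θ := lt_of_lt_of_le zero_lt_one hθ
  have hbound : IntegrableOn (fun s : ℝ => s ^ (-α - 1) / α) (Ioi θ) :=
    (integrableOn_Ioi_rpow_of_lt (by linarith) hθ0).div_const α
  apply Integrable.mono' hbound
  · exact ((g_contOn hα0).mono (Ioi_subset_Ici hθ)).aestronglyMeasurable measurableSet_Ioi
  · filter_upwards [ae_restrict_mem measurableSet_Ioi] with s hs
    have hs1 : (1:ℝ) ≤ s := le_of_lt (lt_of_le_of_lt hθ hs)
    calc ‖Real.cos (s ^ α) * spsi α s‖ = |Real.cos (s ^ α)| * |spsi α s| := abs_mul _ _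
      _ ≤ 1 * |spsi α s| := mul_le_mul_of_nonneg_right (Real.abs_cos_le_one _) (abs_nonneg _)
      _ = |spsi α s| := one_mul _
      _ ≤ s ^ (-α - 1) / α := spsi_bound hα0 hα1 hs1

lemma g_tail_bound {α : ℝ} (hα0 : 0 < α) (hα1 : α < 1) {θ : ℝ} (hθ : 1 ≤ θ) :
    |∫ s in Ioi θ, Real.cos (s ^ α) * spsi α s| ≤ θ ^ (-α) / α ^ 2 := by
  have hθ0 : (0:ℝ) < θ := lt_of_lt_of_le zero_lt_one hθ
  have h1 : |∫ s in Ioi θ, Real.cos (s ^ α) * spsi α s|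
      ≤ ∫ s in Ioi θ, s ^ (-α - 1) / α := by
    rw [← Real.norm_eq_abs]
    apply MeasureTheory.norm_integral_le_of_norm_le
      ((integrableOn_Ioi_rpow_of_lt (a := -α - 1) (by linarith) hθ0).div_const α)
    filter_upwards [ae_restrict_mem measurableSet_Ioi] with s hs
    have hs1 : (1:ℝ) ≤ s := le_of_lt (lt_of_le_of_lt hθ hs)
    calc ‖Real.cos (s ^ α) * spsi α s‖ = |Real.cos (s ^ α)| * |spsi α s| := abs_mul _ _
      _ ≤ 1 * |spsi α s| := mul_le_mul_of_nonneg_right (Real.abs_cos_le_one _) (abs_nonneg _)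
      _ = |spsi α s| := one_mul _
      _ ≤ s ^ (-α - 1) / α := spsi_bound hα0 hα1 hs1
  have h2 : ∫ s in Ioi θ, s ^ (-α - 1) / α = θ ^ (-α) / α ^ 2 := by
    rw [MeasureTheory.integral_div, integral_Ioi_rpow_of_lt (by linarith) hθ0]
    have : -α - 1 + 1 = -α := by ring
    rw [this]
    field_simp
  rw [← h2]; exact h1

lemma sphi_bound {α : ℝ} (hα0 : 0 < α) {s : ℝ} (hs : 1 ≤ s) :
    |sphi α s| ≤ s ^ (-α) / α := by
  have hs0 : (0:ℝ) < s := lt_of_lt_of_le zero_lt_one hs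
  have hφ : sphi α s = s ^ (1 - α) / (α * (1 + s)) := rfl
  rw [hφ, abs_div, abs_of_nonneg (Real.rpow_nonneg hs0.le _), abs_of_nonneg (by positivity : (0:ℝ) ≤ α * (1 + s))]
  have key : s ^ (1 - α) = s ^ (-α) * s := by
    rw [← Real.rpow_add_one hs0.ne']; ring_nf
  rw [key]
  rw [div_le_div_iff₀ (by positivity) hα0]
  have h1 : s ^ (-α) * s * α ≤ s ^ (-α) * (α * (1 + s)) := by
    have : s ^ (-α) * s * α = s ^ (-α) * (α * s) := by ring
    rw [this]
    apply mul_le_mul_of_nonneg_left _ (Real.rpow_nonneg hs0.le _)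
    nlinarith
  exact h1

lemma ibp {α : ℝ} (hα0 : 0 < α) (hα1 : α < 1) {a b : ℝ} (ha : 1 ≤ a) (hab : a ≤ b) :
    ∫ s in a..b, Real.sin (s ^ α) / (1 + s)
      = Real.cos (a ^ α) * sphi α a - Real.cos (b ^ α) * sphi α b
        + ∫ s in a..b, Real.cos (s ^ α) * spsi α s := by
  have huIcc : [[a, b]] = Icc a b := uIcc_of_le hab
  have hpos : ∀ x ∈ [[a, b]], (1:ℝ) ≤ x := by
    rw [huIcc]; exact fun x hx => le_trans ha hx.1
  have hu : ∀ x ∈ [[a, b]], HasDerivAt (sphi α) (spsi α x) x := fun x hx =>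
    hasDerivAt_sphi hα0 (lt_of_lt_of_le zero_lt_one (hpos x hx))
  have hv : ∀ x ∈ [[a, b]], HasDerivAt (fun s : ℝ => -Real.cos (s ^ α))
      (α * x ^ (α - 1) * Real.sin (x ^ α)) x := by
    intro x hx
    have hx0 : (0:ℝ) < x := lt_of_lt_of_le zero_lt_one (hpos x hx)
    have h1 : HasDerivAt (fun s : ℝ => s ^ α) (α * x ^ (α - 1)) x :=
      Real.hasDerivAt_rpow_const (Or.inl hx0.ne')
    have h2 := (Real.hasDerivAt_cos (x ^ α)).comp x h1
    have h3 := h2.neg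
    refine h3.congr_deriv ?_
    ring
  have hIcc : Icc a b ⊆ Ici (1:ℝ) := fun x hx => le_trans ha hx.1
  have hu' : IntervalIntegrable (spsi α) volume a b := by
    apply ContinuousOn.intervalIntegrable
    rw [huIcc]
    have hr : ∀ p : ℝ, ContinuousOn (fun s : ℝ => s ^ p) (Ici (1:ℝ)) := fun p x hx =>
      (Real.continuousAt_rpow_const x p
        (Or.inl (ne_of_gt (lt_of_lt_of_le zero_lt_one hx)))).continuousWithinAt
    refine ContinuousOn.mono ?_ hIcc
    unfold spsi
    apply ContinuousOn.div
    · exact (((hr (-α)).const_smul (1-α)).mul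
        ((continuous_const.add continuous_id).continuousOn)).sub (hr (1-α))
    · exact ((continuous_const.mul ((continuous_const.add continuous_id).pow 2))).continuousOn
    · intro x hx
      have h1 : (1:ℝ) ≤ x := hx
      positivity
  have hv' : IntervalIntegrable (fun x : ℝ => α * x ^ (α - 1) * Real.sin (x ^ α)) volume a b := by
    apply ContinuousOn.intervalIntegrable
    rw [huIcc]
    refine ContinuousOn.mono ?_ hIcc
    apply ContinuousOn.mul
    · apply ContinuousOn.mul continuousOn_const
      exact fun x hx => (Real.continuousAt_rpow_const x (α - 1)
        (Or.inl (ne_of_gt (lt_of_lt_of_le zero_lt_one hx)))).continuousWithinAt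
    · exact Real.continuous_sin.comp_continuousOn (fun x hx =>
        (Real.continuousAt_rpow_const x α (Or.inr hα0.le)).continuousWithinAt)
  have key := intervalIntegral.integral_mul_deriv_eq_deriv_mul hu hv hu' hv'
  have hL : ∫ x in a..b, sphi α x * (α * x ^ (α - 1) * Real.sin (x ^ α))
      = ∫ s in a..b, Real.sin (s ^ α) / (1 + s) := by
    apply intervalIntegral.integral_congr
    intro x hx
    have hx0 : (0:ℝ) < x := lt_of_lt_of_le zero_lt_one (hpos x hx)
    have hone : x ^ (1 - α) * x ^ (α - 1) = 1 := by
      rw [← Real.rpow_add hx0]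
      norm_num
    show sphi α x * (α * x ^ (α - 1) * Real.sin (x ^ α)) = Real.sin (x ^ α) / (1 + x)
    unfold sphi
    field_simp
    linear_combination Real.sin (x ^ α) * hone
  have hR : ∫ x in a..b, spsi α x * (-Real.cos (x ^ α))
      = -∫ s in a..b, Real.cos (s ^ α) * spsi α s := by
    rw [← intervalIntegral.integral_neg]
    apply intervalIntegral.integral_congr
    intro x hx
    show spsi α x * (-Real.cos (x ^ α)) = -(Real.cos (x ^ α) * spsi α x)
    ring
  rw [hL, hR] at key
  rw [key]
  ring

theorem sin_rpow_improper_integral (α : ℝ) (hα0 : 0 < α) (hα1 : α < 1) :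
    ∃ I : ℝ,
      Filter.Tendsto (fun T : ℝ => ∫ s in (0:ℝ)..T, Real.sin (s ^ α) / (1 + s))
        Filter.atTop (nhds I) ∧
      ∃ C : ℝ, ∀ θ : ℝ, 1 ≤ θ →
        |I - ∫ s in (0:ℝ)..θ, Real.sin (s ^ α) / (1 + s)| ≤ C * θ ^ (-α) := by
  set f : ℝ → ℝ := fun s => Real.sin (s ^ α) / (1 + s) with hf
  set g : ℝ → ℝ := fun s => Real.cos (s ^ α) * spsi α s with hg
  have hfint : ∀ a b : ℝ, 0 ≤ a → a ≤ b → IntervalIntegrable f volume a b := by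
    intro a b ha hab
    apply ContinuousOn.intervalIntegrable
    rw [uIcc_of_le hab]
    exact (f_contOn hα0).mono (fun x hx => le_trans ha hx.1)
  have hJint : IntegrableOn g (Ioi 1) := g_int hα0 hα1 le_rfl
  set J : ℝ := ∫ s in Ioi (1:ℝ), g s with hJdef
  set A : ℝ := (∫ s in (0:ℝ)..1, f s) + Real.cos ((1:ℝ) ^ α) * sphi α 1 with hA
  have formula : ∀ T : ℝ, 1 ≤ T →
      ∫ s in (0:ℝ)..T, f s
        = A - Real.cos (T ^ α) * sphi α T + ∫ s in (1:ℝ)..T, g s := by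
    intro T hT
    have h01 : IntervalIntegrable f volume 0 1 := hfint 0 1 le_rfl zero_le_one
    have h1T : IntervalIntegrable f volume 1 T := hfint 1 T zero_le_one hT
    rw [← intervalIntegral.integral_add_adjacent_intervals h01 h1T]
    have := ibp hα0 hα1 (le_refl (1:ℝ)) hT
    rw [hf, hg, this, hA]
    ring
  refine ⟨A + J, ?_, ?_⟩
  · have h1 : Tendsto (fun T : ℝ => Real.cos (T ^ α) * sphi α T) atTop (nhds 0) := by
      refine squeeze_zero_norm' (a := fun T : ℝ => T ^ (-α) / α) ?_ ?_
      · filter_upwards [eventually_ge_atTop (1:ℝ)] with T hT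
        calc ‖Real.cos (T ^ α) * sphi α T‖ = |Real.cos (T ^ α)| * |sphi α T| := abs_mul _ _
          _ ≤ 1 * |sphi α T| :=
              mul_le_mul_of_nonneg_right (Real.abs_cos_le_one _) (abs_nonneg _)
          _ = |sphi α T| := one_mul _
          _ ≤ T ^ (-α) / α := sphi_bound hα0 hT
      · simpa using (tendsto_rpow_neg_atTop hα0).div_const α
    have h2 : Tendsto (fun T : ℝ => ∫ s in (1:ℝ)..T, g s) atTop (nhds J) :=
      intervalIntegral_tendsto_integral_Ioi 1 hJint tendsto_id
    have h3 : Tendsto (fun T : ℝ => A - Real.cos (T ^ α) * sphi α T + ∫ s in (1:ℝ)..T, g s)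
        atTop (nhds (A - 0 + J)) := (tendsto_const_nhds.sub h1).add h2
    rw [sub_zero] at h3
    apply h3.congr'
    filter_upwards [eventually_ge_atTop (1:ℝ)] with T hT
    exact (formula T hT).symm
  · refine ⟨1 / α + 1 / α ^ 2, ?_⟩
    intro θ hθ
    have hθ0 : (0:ℝ) < θ := lt_of_lt_of_le zero_lt_one hθ
    have hsplit : J = (∫ s in (1:ℝ)..θ, g s) + ∫ s in Ioi θ, g s := by
      have hIoc : IntegrableOn g (Ioc 1 θ) := hJint.mono_set Ioc_subset_Ioi_self
      have hIoi : IntegrableOn g (Ioi θ) := g_int hα0 hα1 hθ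
      rw [intervalIntegral.integral_of_le hθ, hJdef,
        ← Set.Ioc_union_Ioi_eq_Ioi hθ,
        MeasureTheory.setIntegral_union ?_ measurableSet_Ioi hIoc hIoi]
      exact Set.Ioc_disjoint_Ioi le_rfl
    rw [formula θ hθ]
    have heq : A + J - (A - Real.cos (θ ^ α) * sphi α θ + ∫ s in (1:ℝ)..θ, g s)
        = Real.cos (θ ^ α) * sphi α θ + ∫ s in Ioi θ, g s := by
      rw [hsplit]; ring
    rw [heq]
    calc |Real.cos (θ ^ α) * sphi α θ + ∫ s in Ioi θ, g s|
        ≤ |Real.cos (θ ^ α) * sphi α θ| + |∫ s in Ioi θ, g s| := abs_add_le _ _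
      _ ≤ θ ^ (-α) / α + θ ^ (-α) / α ^ 2 := by
          apply add_le_add
          · calc |Real.cos (θ ^ α) * sphi α θ| = |Real.cos (θ ^ α)| * |sphi α θ| := abs_mul _ _
              _ ≤ 1 * |sphi α θ| :=
                  mul_le_mul_of_nonneg_right (Real.abs_cos_le_one _) (abs_nonneg _)
              _ = |sphi α θ| := one_mul _
              _ ≤ θ ^ (-α) / α := sphi_bound hα0 hθ
          · exact g_tail_bound hα0 hα1 hθ
      _ = (1 / α + 1 / α ^ 2) * θ ^ (-α) := by ring
end

section
/- For 0 < α < 1, the function σ(t) = sin(t^α)/(1+t) satisfies the stabilisation condition with rate Θ(t) = t^{1-α}: there exist constants C and ω∞ > 0 such that ∫₀ᵗ |exp(∫₀^θ σ(s) ds) - ω∞| dθ ≤ C(1 + t^{1-α}) for all t ≥ 0; in particular this is o(t). -/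
open MeasureTheory intervalIntegral Real Set Filter

namespace SinRpowAux

lemma parts (α : ℝ) (hα0 : 0 < α) (hα1 : α < 1) {θ T : ℝ}
    (hθ : max 1 ((1-α)/α) ≤ θ) (hT : θ ≤ T) :
    |∫ s in θ..T, Real.sin (s ^ α) / (1 + s)| ≤ 2/α * θ ^ (-α) := by
  have h1θ : (1:ℝ) ≤ θ := le_trans (le_max_left _ _) hθ
  have hθ0 : 0 < θ := lt_of_lt_of_le one_pos h1θ
  have hrat : (1-α)/α ≤ θ := le_trans (le_max_right _ _) hθ
  set g : ℝ → ℝ := fun s => s^(1-α) / (α*(1+s)) with hgdef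
  set g' : ℝ → ℝ := fun s =>
    ((1-α)*s^(1-α-1) * (α*(1+s)) - s^(1-α) * (α*1)) / (α*(1+s))^2 with hg'def
  set f : ℝ → ℝ := fun s => -Real.cos (s^α) with hfdef
  set f' : ℝ → ℝ := fun s => Real.sin (s^α) * (α * s^(α-1)) with hf'def
  have hderivg : ∀ s : ℝ, 0 < s → HasDerivAt g (g' s) s := by
    intro s hs
    have hden : α * (1 + s) ≠ 0 := by positivity
    exact (Real.hasDerivAt_rpow_const (Or.inl hs.ne')).div
      (((hasDerivAt_id s).const_add 1).const_mul α) hden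
  have hderivf : ∀ s : ℝ, 0 < s → HasDerivAt f (f' s) s := by
    intro s hs
    have := ((Real.hasDerivAt_rpow_const (p := α) (Or.inl hs.ne')).cos).fun_neg
    simpa [hfdef, hf'def, neg_mul, neg_neg] using this
  have hmem : ∀ s ∈ Icc θ T, 0 < s := fun s hs => lt_of_lt_of_le hθ0 hs.1
  have hrp : ∀ (p:ℝ), ContinuousOn (fun s:ℝ => s ^ p) (Icc θ T) := fun p s hs =>
    (Real.continuousAt_rpow_const s p (Or.inl (ne_of_gt (hmem s hs)))).continuousWithinAt
  have hcontg : ContinuousOn g (Icc θ T) :=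
    fun s hs => ((hderivg s (hmem s hs)).continuousAt).continuousWithinAt
  have hcontf : ContinuousOn f (Icc θ T) :=
    fun s hs => ((hderivf s (hmem s hs)).continuousAt).continuousWithinAt
  have hcontf' : ContinuousOn f' (Icc θ T) :=
    (Real.continuous_sin.comp_continuousOn (hrp α)).mul (continuousOn_const.mul (hrp (α-1)))
  have hcontg' : ContinuousOn g' (Icc θ T) := by
    apply ContinuousOn.div
    · exact (((continuousOn_const.mul (hrp (1-α-1))).mul (by fun_prop)).sub
        ((hrp (1-α)).mul continuousOn_const))
    · fun_prop
    · intro s hs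
      have := hmem s hs
      positivity
  have hicc : Set.uIcc θ T = Icc θ T := uIcc_of_le hT
  have hig' : IntervalIntegrable g' volume θ T :=
    (by rw [hicc]; exact hcontg' : ContinuousOn g' (Set.uIcc θ T)).intervalIntegrable
  have hif' : IntervalIntegrable f' volume θ T :=
    (by rw [hicc]; exact hcontf' : ContinuousOn f' (Set.uIcc θ T)).intervalIntegrable
  -- rewrite integrand
  have step0 : ∫ s in θ..T, Real.sin (s ^ α) / (1 + s) = ∫ s in θ..T, g s * f' s := by
    apply intervalIntegral.integral_congr
    intro s hs
    rw [hicc] at hs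
    have hs0 : 0 < s := hmem s hs
    have hpow : s^(1-α) * s^(α-1) = 1 := by
      rw [← Real.rpow_add hs0]; norm_num
    have h1s : (1:ℝ) + s ≠ 0 := by positivity
    simp only [hgdef, hf'def]
    field_simp
    linear_combination (-Real.sin (s^α)) * hpow
  -- integration by parts
  have step1 : ∫ s in θ..T, g s * f' s
      = g T * f T - g θ * f θ - ∫ s in θ..T, g' s * f s := by
    apply intervalIntegral.integral_mul_deriv_eq_deriv_mul_of_hasDerivAt
    · rw [uIcc_of_le hT]; exact hcontg
    · rw [uIcc_of_le hT]; exact hcontf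
    · intro x hx
      rw [min_eq_left hT, max_eq_right hT] at hx
      exact hderivg x (lt_of_lt_of_le hθ0 hx.1.le)
    · intro x hx
      rw [min_eq_left hT, max_eq_right hT] at hx
      exact hderivf x (lt_of_lt_of_le hθ0 hx.1.le)
    · exact hig'
    · exact hif'
  have habsf : ∀ s : ℝ, |f s| ≤ 1 := by
    intro s; simp only [hfdef, abs_neg]; exact Real.abs_cos_le_one _
  have hgnn : ∀ s : ℝ, 0 < s → 0 ≤ g s := by
    intro s hs
    have : (0:ℝ) ≤ s ^ (1-α) := Real.rpow_nonneg hs.le _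
    have : 0 < α * (1+s) := by positivity
    positivity
  have hbT : |g T * f T| ≤ g T := by
    rw [abs_mul]
    calc |g T| * |f T| ≤ |g T| * 1 := by
          exact mul_le_mul_of_nonneg_left (habsf T) (abs_nonneg _)
    _ = g T := by rw [mul_one, abs_of_nonneg (hgnn T (lt_of_lt_of_le hθ0 hT))]
  have hbθ : |g θ * f θ| ≤ g θ := by
    rw [abs_mul]
    calc |g θ| * |f θ| ≤ |g θ| * 1 := mul_le_mul_of_nonneg_left (habsf θ) (abs_nonneg _)
    _ = g θ := by rw [mul_one, abs_of_nonneg (hgnn θ hθ0)]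
  -- g' ≤ 0 on the interval
  have hg'neg : ∀ s ∈ Icc θ T, g' s ≤ 0 := by
    intro s hs
    have hs0 : 0 < s := hmem s hs
    have hss : s^(1-α) = s^(1-α-1) * s := by
      have h2 : s^(1-α-1) * s^(1:ℝ) = s^(1-α) := by
        rw [← Real.rpow_add hs0]; congr 1; ring
      rw [Real.rpow_one] at h2
      exact h2.symm
    have hsge : (1-α)/α ≤ s := le_trans hrat hs.1
    have hαs : 1 - α ≤ α * s := by
      rw [div_le_iff₀ hα0] at hsge; linarith [hsge]
    have hp : (0:ℝ) ≤ s^(1-α-1) := Real.rpow_nonneg hs0.le _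
    have hnum : (1-α)*s^(1-α-1) * (α*(1+s)) - s^(1-α) * (α*1) ≤ 0 := by
      rw [hss]; nlinarith [mul_nonneg hp hα0.le]
    have hden : (0:ℝ) < (α*(1+s))^2 := by positivity
    simp only [hg'def]
    exact div_nonpos_of_nonpos_of_nonneg hnum hden.le
  have hftc : ∫ s in θ..T, g' s = g T - g θ := by
    apply intervalIntegral.integral_eq_sub_of_hasDerivAt
    · intro x hx
      rw [hicc] at hx
      exact hderivg x (hmem x hx)
    · exact hig'
  have hb3 : |∫ s in θ..T, g' s * f s| ≤ g θ - g T := by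
    have hintprod : IntervalIntegrable (fun s => g' s * f s) volume θ T :=
      (by rw [hicc]; exact hcontg'.mul hcontf :
        ContinuousOn (fun s => g' s * f s) (Set.uIcc θ T)).intervalIntegrable
    have hptwise : ∀ s ∈ Set.uIoc θ T, ‖g' s * f s‖ ≤ -g' s := by
      intro s hs
      rw [Set.uIoc_of_le hT] at hs
      have hsI : s ∈ Icc θ T := ⟨hs.1.le, hs.2⟩
      have h1 := hg'neg s hsI
      rw [Real.norm_eq_abs, abs_mul, abs_of_nonpos h1]
      calc -g' s * |f s| ≤ -g' s * 1 := mul_le_mul_of_nonneg_left (habsf s) (by linarith)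
      _ = -g' s := mul_one _
    have hGTθ : g T ≤ g θ := by
      have h0 : 0 ≤ ∫ s in θ..T, -g' s :=
        intervalIntegral.integral_nonneg hT (fun u hu => by linarith [hg'neg u hu])
      rw [intervalIntegral.integral_neg, hftc] at h0; linarith
    have hae : ∀ᵐ t ∂(volume.restrict (Set.uIoc θ T)), ‖g' t * f t‖ ≤ -g' t :=
      (MeasureTheory.ae_restrict_iff' measurableSet_uIoc).mpr
        (Filter.Eventually.of_forall hptwise)
    have hle := intervalIntegral.norm_integral_le_abs_of_norm_le hae hig'.neg
    rw [Real.norm_eq_abs] at hle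
    calc |∫ s in θ..T, g' s * f s| ≤ |∫ s in θ..T, -g' s| := hle
    _ = |-(g T - g θ)| := by rw [intervalIntegral.integral_neg, hftc]
    _ = g θ - g T := by rw [abs_of_nonneg (by linarith)]; ring
  -- assemble
  have hx : 0 < θ^(-α) := Real.rpow_pos_of_pos hθ0 _
  have hpowθ : θ^(1-α) = θ^(-α) * θ := by
    have h2 : θ^(-α) * θ^(1:ℝ) = θ^(1-α) := by
      rw [← Real.rpow_add hθ0]; congr 1; ring
    rw [Real.rpow_one] at h2
    exact h2.symm
  have hgθ : g θ ≤ θ^(-α)/α := by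
    show θ^(1-α)/(α*(1+θ)) ≤ θ^(-α)/α
    rw [hpowθ, div_le_div_iff₀ (by positivity) hα0]
    nlinarith [mul_nonneg hx.le hα0.le]
  calc |∫ s in θ..T, Real.sin (s ^ α) / (1 + s)|
      = |g T * f T - g θ * f θ - ∫ s in θ..T, g' s * f s| := by rw [step0, step1]
  _ ≤ |g T * f T| + |g θ * f θ| + |∫ s in θ..T, g' s * f s| := by
      calc |g T * f T - g θ * f θ - ∫ s in θ..T, g' s * f s|
          ≤ |g T * f T - g θ * f θ| + |∫ s in θ..T, g' s * f s| := abs_sub _ _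
      _ ≤ |g T * f T| + |g θ * f θ| + |∫ s in θ..T, g' s * f s| := by
          have := abs_sub (g T * f T) (g θ * f θ)
          linarith
  _ ≤ g T + g θ + (g θ - g T) := by linarith [hbT, hbθ, hb3]
  _ = 2 * g θ := by ring
  _ ≤ 2 * (θ^(-α)/α) := by linarith [hgθ]
  _ = 2/α * θ^(-α) := by ring


lemma intble_sg (α : ℝ) (hα0 : 0 < α) {a b : ℝ} (ha : 0 ≤ a) (hb : 0 ≤ b) :
    IntervalIntegrable (fun s : ℝ => Real.sin (s ^ α) / (1 + s)) volume a b := by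
  apply ContinuousOn.intervalIntegrable
  apply ContinuousOn.div
  · apply (Real.continuous_sin.comp (Real.continuous_rpow_const hα0.le)).continuousOn
  · fun_prop
  · intro s hs
    have h0 : (0:ℝ) ≤ s := le_trans (le_min ha hb) hs.1
    positivity

lemma Fdiff (α : ℝ) (hα0 : 0 < α) {a b : ℝ} (ha : 0 ≤ a) (hb : 0 ≤ b) :
    (∫ s in (0:ℝ)..b, Real.sin (s ^ α) / (1 + s))
      - (∫ s in (0:ℝ)..a, Real.sin (s ^ α) / (1 + s))
      = ∫ s in a..b, Real.sin (s ^ α) / (1 + s) := by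
  rw [← intervalIntegral.integral_add_adjacent_intervals
    (intble_sg α hα0 le_rfl ha) (intble_sg α hα0 ha hb)]
  ring

lemma Fdiff_abs (α : ℝ) {a b : ℝ} (ha : 0 ≤ a) (hb : 0 ≤ b) :
    |∫ s in a..b, Real.sin (s ^ α) / (1 + s)| ≤ |b - a| := by
  have h := intervalIntegral.norm_integral_le_of_norm_le_const
    (f := fun s : ℝ => Real.sin (s ^ α) / (1 + s)) (a := a) (b := b) (C := 1) ?_
  · simpa using h
  · intro x hx
    have hx0 : 0 < x := lt_of_le_of_lt (le_min ha hb) hx.1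
    rw [Real.norm_eq_abs, abs_div]
    rw [div_le_one (by rw [abs_of_pos (by linarith)]; linarith)]
    calc |Real.sin (x ^ α)| ≤ 1 := Real.abs_sin_le_one _
    _ ≤ |1 + x| := by rw [abs_of_pos (by linarith)]; linarith

lemma tail (α : ℝ) (hα0 : 0 < α) (hα1 : α < 1) (I : ℝ)
    (hI : Filter.Tendsto (fun T : ℝ => ∫ s in (0:ℝ)..T, Real.sin (s ^ α) / (1 + s))
      Filter.atTop (nhds I)) {θ : ℝ} (hθ : max 1 ((1-α)/α) ≤ θ) :
    |(∫ s in (0:ℝ)..θ, Real.sin (s ^ α) / (1 + s)) - I| ≤ 2/α * θ ^ (-α) := by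
  have hθ0 : (0:ℝ) ≤ θ := le_trans zero_le_one (le_trans (le_max_left _ _) hθ)
  set F : ℝ → ℝ := fun x => ∫ s in (0:ℝ)..x, Real.sin (s ^ α) / (1 + s) with hF
  have htend : Filter.Tendsto (fun T => |F θ - F T|) Filter.atTop (nhds |F θ - I|) :=
    ((tendsto_const_nhds.sub hI).abs)
  apply le_of_tendsto htend
  filter_upwards [Filter.eventually_ge_atTop θ] with T hT
  have hTd : F θ - F T = -(∫ s in θ..T, Real.sin (s ^ α) / (1 + s)) := by
    rw [← Fdiff α hα0 hθ0 (le_trans hθ0 hT)]; ring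
  rw [hTd, abs_neg]
  exact parts α hα0 hα1 hθ hT

lemma expdiff (a b : ℝ) : |Real.exp a - Real.exp b| ≤ Real.exp (max a b) * |a - b| := by
  have key : ∀ x y : ℝ, x ≤ y →
      |Real.exp x - Real.exp y| ≤ Real.exp (max x y) * |x - y| := by
    intro x y hxy
    rw [max_eq_right hxy, abs_of_nonpos (by simp [Real.exp_le_exp, hxy]),
      abs_of_nonpos (by linarith)]
    have h1 := Real.add_one_le_exp (x - y)
    have h2 : Real.exp (x - y) * Real.exp y = Real.exp x := by
      rw [← Real.exp_add]; ring_nf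
    nlinarith [Real.exp_pos y]
  rcases le_total a b with h | h
  · exact key a b h
  · have := key b a h
    rwa [max_comm, abs_sub_comm (Real.exp b), abs_sub_comm b a] at this


lemma Fbound (α : ℝ) (hα0 : 0 < α) (hα1 : α < 1) (I : ℝ)
    (hI : Filter.Tendsto (fun T : ℝ => ∫ s in (0:ℝ)..T, Real.sin (s ^ α) / (1 + s))
      Filter.atTop (nhds I)) {θ : ℝ} (hθ : 0 ≤ θ) :
    |∫ s in (0:ℝ)..θ, Real.sin (s ^ α) / (1 + s)| ≤ max 1 ((1-α)/α) + |I| + 2/α := by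
  set θ₀ := max 1 ((1-α)/α) with hθ₀
  have h1 : (1:ℝ) ≤ θ₀ := le_max_left _ _
  have h2α : (0:ℝ) < 2/α := by positivity
  rcases le_total θ θ₀ with h | h
  · have := Fdiff_abs α (a := 0) (b := θ) le_rfl hθ
    rw [sub_zero, abs_of_nonneg hθ] at this
    have hI0 : (0:ℝ) ≤ |I| := abs_nonneg _
    linarith
  · have htail := tail α hα0 hα1 I hI h
    have hle1 : θ ^ (-α) ≤ 1 :=
      Real.rpow_le_one_of_one_le_of_nonpos (le_trans h1 h) (by linarith)
    have : |∫ s in (0:ℝ)..θ, Real.sin (s ^ α) / (1 + s)|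
        ≤ |(∫ s in (0:ℝ)..θ, Real.sin (s ^ α) / (1 + s)) - I| + |I| := by
      calc |∫ s in (0:ℝ)..θ, Real.sin (s ^ α) / (1 + s)|
          = |((∫ s in (0:ℝ)..θ, Real.sin (s ^ α) / (1 + s)) - I) + I| := by
            congr 1; ring
      _ ≤ _ := abs_add_le _ _
    have h3 : 2/α * θ^(-α) ≤ 2/α * 1 := by nlinarith
    have h0 : (0:ℝ) ≤ θ₀ := by linarith
    have hI0 : (0:ℝ) ≤ |I| := abs_nonneg _
    nlinarith [htail]

theorem main (α : ℝ) (hα0 : 0 < α) (hα1 : α < 1) (I : ℝ)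
    (hI : Filter.Tendsto (fun T : ℝ => ∫ s in (0:ℝ)..T, Real.sin (s ^ α) / (1 + s))
      Filter.atTop (nhds I)) :
    (∃ C : ℝ, ∀ t : ℝ, 0 ≤ t →
      (∫ θ in (0:ℝ)..t,
          |Real.exp (∫ s in (0:ℝ)..θ, Real.sin (s ^ α) / (1 + s)) - Real.exp I|)
        ≤ C * (1 + t ^ (1 - α))) ∧
    (fun t : ℝ => ∫ θ in (0:ℝ)..t,
        |Real.exp (∫ s in (0:ℝ)..θ, Real.sin (s ^ α) / (1 + s)) - Real.exp I|)
      =o[Filter.atTop] (fun t : ℝ => t) := by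
  set θ₀ := max 1 ((1-α)/α) with hθ₀def
  have hθ₀1 : (1:ℝ) ≤ θ₀ := le_max_left _ _
  have hθ₀0 : (0:ℝ) < θ₀ := lt_of_lt_of_le one_pos hθ₀1
  set B := θ₀ + |I| + 2/α with hBdef
  have hIB : |I| ≤ B := by
    have : (0:ℝ) < 2/α := by positivity
    simp only [hBdef]; linarith
  set F : ℝ → ℝ := fun x => ∫ s in (0:ℝ)..x, Real.sin (s ^ α) / (1 + s) with hFdef
  set G : ℝ → ℝ := fun θ => |Real.exp (F θ) - Real.exp I| with hGdef
  have hFB : ∀ θ : ℝ, 0 ≤ θ → |F θ| ≤ B := fun θ hθ => Fbound α hα0 hα1 I hI hθ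
  -- continuity of F on Ici 0 (Lipschitz)
  have hFcont : ContinuousOn F (Set.Ici 0) := by
    have : LipschitzOnWith 1 F (Set.Ici 0) := by
      apply LipschitzOnWith.of_dist_le_mul
      intro x hx y hy
      rw [Real.dist_eq, Real.dist_eq, NNReal.coe_one, one_mul]
      have := Fdiff_abs α (a := y) (b := x) (hy : (0:ℝ) ≤ y) (hx : (0:ℝ) ≤ x)
      rw [← Fdiff α hα0 hy hx] at this
      exact this
    exact this.continuousOn
  have hGcont : ContinuousOn G (Set.Ici 0) :=
    ((Real.continuous_exp.comp_continuousOn hFcont).sub continuousOn_const).abs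
  have hGnn : ∀ θ : ℝ, 0 ≤ G θ := fun θ => abs_nonneg _
  have hGb2 : ∀ θ : ℝ, 0 ≤ θ → G θ ≤ 2 * Real.exp B := by
    intro θ hθ
    have h1 : Real.exp (F θ) ≤ Real.exp B :=
      Real.exp_le_exp.mpr (le_trans (le_abs_self _) (hFB θ hθ))
    have h2 : Real.exp I ≤ Real.exp B :=
      Real.exp_le_exp.mpr (le_trans (le_abs_self _) hIB)
    calc G θ ≤ |Real.exp (F θ)| + |Real.exp I| := abs_sub _ _
    _ = Real.exp (F θ) + Real.exp I := by
        rw [abs_of_pos (Real.exp_pos _), abs_of_pos (Real.exp_pos _)]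
    _ ≤ 2 * Real.exp B := by linarith
  have hGtail : ∀ θ : ℝ, θ₀ ≤ θ → G θ ≤ Real.exp B * (2/α * θ ^ (-α)) := by
    intro θ hθ
    have hθ0 : (0:ℝ) ≤ θ := le_trans hθ₀0.le hθ
    have h1 : max (F θ) I ≤ B :=
      max_le (le_trans (le_abs_self _) (hFB θ hθ0)) (le_trans (le_abs_self _) hIB)
    calc G θ ≤ Real.exp (max (F θ) I) * |F θ - I| := expdiff _ _
    _ ≤ Real.exp B * (2/α * θ ^ (-α)) := by
        apply mul_le_mul (Real.exp_le_exp.mpr h1) (tail α hα0 hα1 I hI hθ)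
          (abs_nonneg _) (Real.exp_pos _).le
  set C := max (2 * Real.exp B * θ₀) (Real.exp B * (2/α) / (1-α)) with hCdef
  have hC0 : (0:ℝ) ≤ C := le_trans (by positivity) (le_max_left _ _)
  have hC1 : 2 * Real.exp B * θ₀ ≤ C := le_max_left _ _
  have hC2 : Real.exp B * (2/α) / (1-α) ≤ C := le_max_right _ _
  have key : ∀ t : ℝ, 0 ≤ t → (∫ θ in (0:ℝ)..t, G θ) ≤ C * (1 + t ^ (1-α)) := by
    intro t ht
    have ht1α : 0 ≤ t ^ (1-α) := Real.rpow_nonneg ht _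
    have hintG : ∀ a b : ℝ, 0 ≤ a → 0 ≤ b → IntervalIntegrable G volume a b := by
      intro a b ha hb
      apply (hGcont.mono _).intervalIntegrable
      intro x hx
      exact le_trans (le_min ha hb) hx.1
    have hfirst : ∀ b : ℝ, 0 ≤ b → b ≤ θ₀ → (∫ θ in (0:ℝ)..b, G θ) ≤ 2 * Real.exp B * θ₀ := by
      intro b hb hbθ₀
      have h := intervalIntegral.norm_integral_le_of_norm_le_const
        (f := G) (a := 0) (b := b) (C := 2 * Real.exp B) ?_
      · rw [Real.norm_eq_abs, sub_zero, abs_of_nonneg hb] at h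
        calc (∫ θ in (0:ℝ)..b, G θ) ≤ |∫ θ in (0:ℝ)..b, G θ| := le_abs_self _
        _ ≤ 2 * Real.exp B * b := h
        _ ≤ 2 * Real.exp B * θ₀ := by nlinarith [Real.exp_pos B]
      · intro x hx
        have : (0:ℝ) < x := lt_of_le_of_lt (le_min le_rfl hb) hx.1
        rw [Real.norm_eq_abs, abs_of_nonneg (hGnn x)]
        exact hGb2 x this.le
    rcases le_total t θ₀ with h | h
    · calc (∫ θ in (0:ℝ)..t, G θ) ≤ 2 * Real.exp B * θ₀ := hfirst t ht h
      _ ≤ C := hC1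
      _ ≤ C * (1 + t ^ (1-α)) := by nlinarith
    · have hsum : (∫ θ in (0:ℝ)..θ₀, G θ) + (∫ θ in θ₀..t, G θ) = ∫ θ in (0:ℝ)..t, G θ :=
        intervalIntegral.integral_add_adjacent_intervals
          (hintG 0 θ₀ le_rfl hθ₀0.le) (hintG θ₀ t hθ₀0.le ht)
      have hpart1 : (∫ θ in (0:ℝ)..θ₀, G θ) ≤ 2 * Real.exp B * θ₀ := hfirst θ₀ hθ₀0.le le_rfl
      have hintrpow : IntervalIntegrable (fun θ : ℝ => Real.exp B * (2/α * θ ^ (-α)))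
          volume θ₀ t := by
        apply ContinuousOn.intervalIntegrable
        apply ContinuousOn.mul continuousOn_const
        apply ContinuousOn.mul continuousOn_const
        intro x hx
        have hx0 : (0:ℝ) < x := lt_of_lt_of_le hθ₀0 (le_trans (le_min le_rfl h) hx.1)
        exact (Real.continuousAt_rpow_const x (-α) (Or.inl hx0.ne')).continuousWithinAt
      have hpart2 : (∫ θ in θ₀..t, G θ) ≤ ∫ θ in θ₀..t, Real.exp B * (2/α * θ ^ (-α)) := by
        apply intervalIntegral.integral_mono_on h (hintG θ₀ t hθ₀0.le ht) hintrpow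
        intro x hx
        exact hGtail x hx.1
      have hea : -α + 1 = 1 - α := by ring
      have h1α : (0:ℝ) < 1 - α := by linarith
      have hval : (∫ θ in θ₀..t, (θ:ℝ) ^ (-α)) = (t ^ (1-α) - θ₀ ^ (1-α)) / (1-α) := by
        rw [integral_rpow (Or.inl (by linarith)), hea]
      have hval2 : (∫ θ in θ₀..t, Real.exp B * (2/α * θ ^ (-α)))
          = Real.exp B * (2/α) * ((t ^ (1-α) - θ₀ ^ (1-α)) / (1-α)) := by
        rw [intervalIntegral.integral_const_mul, intervalIntegral.integral_const_mul, hval]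
        ring
      have hθ₀exp : (0:ℝ) ≤ θ₀ ^ (1-α) := Real.rpow_nonneg hθ₀0.le _
      have hpart2' : (∫ θ in θ₀..t, G θ) ≤ Real.exp B * (2/α) / (1-α) * t ^ (1-α) := by
        rw [hval2] at hpart2
        calc (∫ θ in θ₀..t, G θ)
            ≤ Real.exp B * (2/α) * ((t ^ (1-α) - θ₀ ^ (1-α)) / (1-α)) := hpart2
        _ ≤ Real.exp B * (2/α) * (t ^ (1-α) / (1-α)) := by
            gcongr
            linarith
        _ = Real.exp B * (2/α) / (1-α) * t ^ (1-α) := by ring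
      have hC2' : Real.exp B * (2/α) / (1-α) * t ^ (1-α) ≤ C * t ^ (1-α) :=
        mul_le_mul_of_nonneg_right hC2 ht1α
      have hexpand : C * (1 + t ^ (1-α)) = C + C * t ^ (1-α) := by ring
      rw [← hsum, hexpand]
      linarith
  refine ⟨⟨C, key⟩, ?_⟩
  -- the little-o part
  have hRo : (fun t : ℝ => C * (1 + t ^ (1-α))) =o[Filter.atTop] (fun t : ℝ => t) := by
    have h1 : (fun _ : ℝ => (1:ℝ)) =o[Filter.atTop] (fun t : ℝ => t) :=
      Asymptotics.isLittleO_const_id_atTop 1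
    have h2 : (fun t : ℝ => t ^ (1-α)) =o[Filter.atTop] (fun t : ℝ => t) := by
      rw [Asymptotics.isLittleO_iff_tendsto']
      · apply (tendsto_rpow_neg_atTop hα0).congr'
        filter_upwards [Filter.eventually_gt_atTop (0:ℝ)] with x hx
        have hxa : (0:ℝ) < x ^ α := Real.rpow_pos_of_pos hx α
        rw [Real.rpow_sub hx, Real.rpow_one, Real.rpow_neg hx.le]
        field_simp
      · filter_upwards [Filter.eventually_gt_atTop (0:ℝ)] with x hx h
        exact absurd h hx.ne'
    have := (h1.add h2).const_mul_left C
    simpa [mul_add] using this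
  apply Asymptotics.IsBigO.trans_isLittleO _ hRo
  rw [Asymptotics.isBigO_iff]
  refine ⟨1, ?_⟩
  filter_upwards [Filter.eventually_ge_atTop (0:ℝ)] with t ht
  rw [one_mul, Real.norm_eq_abs, Real.norm_eq_abs]
  have h1 := key t ht
  have h2 : 0 ≤ ∫ θ in (0:ℝ)..t, G θ :=
    intervalIntegral.integral_nonneg ht (fun u _ => hGnn u)
  rw [abs_of_nonneg h2]
  exact le_trans h1 (le_abs_self _)

end SinRpowAux

theorem sin_rpow_stabilisation (α : ℝ) (hα0 : 0 < α) (hα1 : α < 1) (I : ℝ)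
    (hI : Filter.Tendsto (fun T : ℝ => ∫ s in (0:ℝ)..T, Real.sin (s ^ α) / (1 + s))
      Filter.atTop (nhds I)) :
    (∃ C : ℝ, ∀ t : ℝ, 0 ≤ t →
      (∫ θ in (0:ℝ)..t,
          |Real.exp (∫ s in (0:ℝ)..θ, Real.sin (s ^ α) / (1 + s)) - Real.exp I|)
        ≤ C * (1 + t ^ (1 - α))) ∧
    (fun t : ℝ => ∫ θ in (0:ℝ)..t,
        |Real.exp (∫ s in (0:ℝ)..θ, Real.sin (s ^ α) / (1 + s)) - Real.exp I|)
      =o[Filter.atTop] (fun t : ℝ => t) := by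
  exact SinRpowAux.main α hα0 hα1 I hI
end

section
/- For every k ≥ 0 and 0 < α < 1, the k-th derivative of t ↦ sin(t^α)/(1+t) satisfies |d^k/dt^k [sin(t^α)/(1+t)]| ≤ C_k (1+t)^{-1-k(1-α)} for all t ≥ 1. -/
namespace SinRpowAux

/-- A term of the form `c * t ^ e1 * (1+t) ^ e2 * trig(t^α)`. -/
structure Tm where
  c : ℝ
  e1 : ℝ
  e2 : ℝ
  s : Bool

noncomputable def trig (b : Bool) (x : ℝ) : ℝ := if b then Real.sin x else Real.cos x

noncomputable def tmEval (α : ℝ) (p : Tm) (t : ℝ) : ℝ :=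
  p.c * t ^ p.e1 * (1 + t) ^ p.e2 * trig p.s (t ^ α)

noncomputable def lEval (α : ℝ) (L : List Tm) (t : ℝ) : ℝ :=
  (L.map fun p => tmEval α p t).sum

noncomputable def tmD (α : ℝ) (p : Tm) : List Tm :=
  [⟨p.c * p.e1, p.e1 - 1, p.e2, p.s⟩,
   ⟨p.c * p.e2, p.e1, p.e2 - 1, p.s⟩,
   ⟨(if p.s then p.c else -p.c) * α, p.e1 + α - 1, p.e2, !p.s⟩]

noncomputable def LL (α : ℝ) : ℕ → List Tm
  | 0 => [⟨1, 0, -1, true⟩]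
  | k + 1 => (LL α k).flatMap (tmD α)

lemma lEval_nil (α t : ℝ) : lEval α [] t = 0 := by simp [lEval]

lemma lEval_cons (α : ℝ) (p : Tm) (L : List Tm) :
    lEval α (p :: L) = fun t => tmEval α p t + lEval α L t := by
  funext t; simp [lEval]

lemma lEval_append (α : ℝ) (L M : List Tm) (t : ℝ) :
    lEval α (L ++ M) t = lEval α L t + lEval α M t := by
  simp [lEval]

lemma hasDerivAt_tm (α : ℝ) (p : Tm) {t : ℝ} (ht : 0 < t) :
    HasDerivAt (tmEval α p) (lEval α (tmD α p) t) t := by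
  obtain ⟨c, b, g, s⟩ := p
  have h1t : (0 : ℝ) < 1 + t := by linarith
  have h1 : HasDerivAt (fun s : ℝ => s ^ b) (b * t ^ (b - 1)) t :=
    Real.hasDerivAt_rpow_const (Or.inl ht.ne')
  have h2 : HasDerivAt (fun s : ℝ => (1 + s) ^ g) (g * (1 + t) ^ (g - 1)) t := by
    have := (Real.hasDerivAt_rpow_const (p := g) (Or.inl h1t.ne')).comp t
      ((hasDerivAt_id t).const_add 1)
    simpa [Function.comp_def] using this
  have hr : HasDerivAt (fun s : ℝ => s ^ α) (α * t ^ (α - 1)) t :=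
    Real.hasDerivAt_rpow_const (Or.inl ht.ne')
  have hadd : t ^ (b + α - 1) = t ^ b * t ^ (α - 1) := by
    rw [show b + α - 1 = b + (α - 1) by ring, Real.rpow_add ht]
  cases s with
  | true =>
    have h3 : HasDerivAt (fun s : ℝ => Real.sin (s ^ α))
        (Real.cos (t ^ α) * (α * t ^ (α - 1))) t :=
      hr.sin
    have H := ((h1.mul h2).mul h3).const_mul c
    have hfun : (tmEval α ⟨c, b, g, true⟩)
        = fun s : ℝ => c * ((s ^ b * (1 + s) ^ g) * Real.sin (s ^ α)) := by
      funext s; simp [tmEval, trig]; ring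
    rw [hfun]
    refine H.congr_deriv ?_
    simp [lEval, tmEval, tmD, trig, hadd]
    ring
  | false =>
    have h3 : HasDerivAt (fun s : ℝ => Real.cos (s ^ α))
        (-Real.sin (t ^ α) * (α * t ^ (α - 1))) t :=
      hr.cos
    have H := ((h1.mul h2).mul h3).const_mul c
    have hfun : (tmEval α ⟨c, b, g, false⟩)
        = fun s : ℝ => c * ((s ^ b * (1 + s) ^ g) * Real.cos (s ^ α)) := by
      funext s; simp [tmEval, trig]; ring
    rw [hfun]
    refine H.congr_deriv ?_
    simp [lEval, tmEval, tmD, trig, hadd]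
    ring

lemma hasDerivAt_lEval (α : ℝ) (L : List Tm) {t : ℝ} (ht : 0 < t) :
    HasDerivAt (lEval α L) (lEval α (L.flatMap (tmD α)) t) t := by
  induction L with
  | nil =>
    have : lEval α [] = fun _ : ℝ => (0 : ℝ) := by funext s; simp [lEval]
    rw [this]
    simpa [lEval] using hasDerivAt_const t (0 : ℝ)
  | cons p L ih =>
    rw [lEval_cons]
    have := (hasDerivAt_tm α p ht).add ih
    have heq : lEval α ((p :: L).flatMap (tmD α)) t
        = lEval α (tmD α p) t + lEval α (L.flatMap (tmD α)) t := by
      rw [List.flatMap_cons, lEval_append]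
    rw [heq]
    exact this

lemma iter_eq (α : ℝ) (k : ℕ) :
    ∀ t : ℝ, 0 < t →
      iteratedDeriv k (fun s : ℝ => Real.sin (s ^ α) / (1 + s)) t = lEval α (LL α k) t := by
  induction k with
  | zero =>
    intro t ht
    simp only [iteratedDeriv_zero, LL, lEval, tmEval, trig, List.map_cons, List.map_nil,
      List.sum_cons, List.sum_nil]
    rw [Real.rpow_zero, Real.rpow_neg_one]
    simp [div_eq_mul_inv]
    ring
  | succ k ih =>
    intro t ht
    rw [iteratedDeriv_succ]
    have hev : iteratedDeriv k (fun s : ℝ => Real.sin (s ^ α) / (1 + s))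
        =ᶠ[nhds t] lEval α (LL α k) :=
      Filter.eventuallyEq_of_mem (isOpen_Ioi.mem_nhds ht) fun s hs => ih s hs
    rw [hev.deriv_eq]
    exact (hasDerivAt_lEval α (LL α k) ht).deriv

lemma tm_bound (α : ℝ) (p : Tm) {E : ℝ} (hE : p.e1 + p.e2 ≤ E) {t : ℝ} (ht : 1 ≤ t) :
    |tmEval α p t| ≤ (|p.c| * 2 ^ |p.e1|) * (1 + t) ^ E := by
  have ht0 : (0 : ℝ) < t := by linarith
  have h1t : (1 : ℝ) ≤ 1 + t := by linarith
  have h1t0 : (0 : ℝ) < 1 + t := by linarith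
  have htrig : |trig p.s (t ^ α)| ≤ 1 := by
    cases p.s <;> simp [trig, Real.abs_sin_le_one, Real.abs_cos_le_one]
  have key : t ^ p.e1 ≤ 2 ^ |p.e1| * (1 + t) ^ p.e1 := by
    rcases le_or_gt 0 p.e1 with hb | hb
    · rw [abs_of_nonneg hb]
      calc t ^ p.e1 ≤ (1 + t) ^ p.e1 :=
            Real.rpow_le_rpow ht0.le (by linarith) hb
        _ ≤ 2 ^ p.e1 * (1 + t) ^ p.e1 := by
            nlinarith [Real.one_le_rpow (by norm_num : (1:ℝ) ≤ 2) hb,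
              Real.rpow_nonneg h1t0.le p.e1]
    · rw [abs_of_neg hb]
      have h2t : 1 + t ≤ 2 * t := by linarith
      have : (2 * t) ^ p.e1 ≤ (1 + t) ^ p.e1 :=
        Real.rpow_le_rpow_of_nonpos h1t0 h2t hb.le
      rw [Real.mul_rpow (by norm_num) ht0.le] at this
      have h2 : (0:ℝ) < (2:ℝ) ^ p.e1 := Real.rpow_pos_of_pos (by norm_num) _
      have h2' : (2:ℝ) ^ (-p.e1) = ((2:ℝ) ^ p.e1)⁻¹ := Real.rpow_neg (by norm_num) _
      rw [h2']
      calc t ^ p.e1 = (2 ^ p.e1)⁻¹ * (2 ^ p.e1 * t ^ p.e1) := by field_simp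
        _ ≤ (2 ^ p.e1)⁻¹ * (1 + t) ^ p.e1 := by
            exact mul_le_mul_of_nonneg_left this (by positivity)
  have hmono : (1 + t) ^ (p.e1 + p.e2) ≤ (1 + t) ^ E :=
    Real.rpow_le_rpow_of_exponent_le h1t hE
  have habs : |tmEval α p t| ≤ |p.c| * (t ^ p.e1 * (1 + t) ^ p.e2) := by
    rw [tmEval, abs_mul, abs_mul, abs_mul,
      abs_of_nonneg (Real.rpow_nonneg ht0.le _),
      abs_of_nonneg (Real.rpow_nonneg h1t0.le _)]
    calc |p.c| * t ^ p.e1 * (1 + t) ^ p.e2 * |trig p.s (t ^ α)|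
        ≤ |p.c| * t ^ p.e1 * (1 + t) ^ p.e2 * 1 := by
          apply mul_le_mul_of_nonneg_left htrig
          positivity
      _ = |p.c| * (t ^ p.e1 * (1 + t) ^ p.e2) := by ring
  calc |tmEval α p t| ≤ |p.c| * (t ^ p.e1 * (1 + t) ^ p.e2) := habs
    _ ≤ |p.c| * ((2 ^ |p.e1| * (1 + t) ^ p.e1) * (1 + t) ^ p.e2) := by
        apply mul_le_mul_of_nonneg_left _ (abs_nonneg _)
        exact mul_le_mul_of_nonneg_right key (Real.rpow_nonneg h1t0.le _)
    _ = (|p.c| * 2 ^ |p.e1|) * ((1 + t) ^ p.e1 * (1 + t) ^ p.e2) := by ring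
    _ = (|p.c| * 2 ^ |p.e1|) * (1 + t) ^ (p.e1 + p.e2) := by
        rw [← Real.rpow_add h1t0]
    _ ≤ (|p.c| * 2 ^ |p.e1|) * (1 + t) ^ E := by
        apply mul_le_mul_of_nonneg_left hmono
        positivity

lemma lEval_bound (α : ℝ) (L : List Tm) {E : ℝ} (hE : ∀ p ∈ L, p.e1 + p.e2 ≤ E)
    {t : ℝ} (ht : 1 ≤ t) :
    |lEval α L t| ≤ (L.map fun p => |p.c| * 2 ^ |p.e1|).sum * (1 + t) ^ E := by
  induction L with
  | nil => simp [lEval]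
  | cons p L ih =>
    rw [lEval_cons]
    simp only [List.map_cons, List.sum_cons, add_mul]
    calc |tmEval α p t + lEval α L t| ≤ |tmEval α p t| + |lEval α L t| := abs_add_le _ _
      _ ≤ (|p.c| * 2 ^ |p.e1|) * (1 + t) ^ E
          + (L.map fun p => |p.c| * 2 ^ |p.e1|).sum * (1 + t) ^ E := by
        gcongr ?_ + ?_
        · exact tm_bound α p (hE p List.mem_cons_self) ht
        · exact ih fun q hq => hE q (List.mem_cons_of_mem p hq)

lemma inv_LL (α : ℝ) (hα0 : 0 < α) (hα1 : α < 1) (k : ℕ) :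
    ∀ p ∈ LL α k, p.e1 + p.e2 ≤ -1 - (k : ℝ) * (1 - α) := by
  induction k with
  | zero =>
    intro p hp
    simp only [LL, List.mem_singleton] at hp
    subst hp
    norm_num
  | succ k ih =>
    intro p hp
    simp only [LL, List.mem_flatMap] at hp
    obtain ⟨q, hq, hpq⟩ := hp
    have hqle := ih q hq
    have hcast : ((k : ℝ) + 1) * (1 - α) = (k : ℝ) * (1 - α) + (1 - α) := by ring
    simp only [tmD, List.mem_cons, List.mem_singleton, List.not_mem_nil, or_false] at hpq
    obtain ⟨c, b, g, s⟩ := q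
    rcases hpq with h | h | h <;> subst h <;> simp only [Nat.cast_succ] at * <;> nlinarith
end SinRpowAux

open SinRpowAux in
theorem sin_rpow_derivative_bounds (α : ℝ) (hα0 : 0 < α) (hα1 : α < 1) (k : ℕ) :
    ∃ C : ℝ, 0 < C ∧ ∀ t : ℝ, 1 ≤ t →
      |iteratedDeriv k (fun s : ℝ => Real.sin (s ^ α) / (1 + s)) t|
        ≤ C * (1 + t) ^ (-1 - (k : ℝ) * (1 - α)) := by
  set L := LL α k with hL
  set S := (L.map fun p => |p.c| * 2 ^ |p.e1|).sum with hS
  have hS0 : 0 ≤ S := by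
    apply List.sum_nonneg
    intro x hx
    simp only [List.mem_map] at hx
    obtain ⟨p, _, rfl⟩ := hx
    positivity
  refine ⟨S + 1, by linarith, fun t ht => ?_⟩
  have ht0 : (0 : ℝ) < t := by linarith
  have h1t0 : (0 : ℝ) < 1 + t := by linarith
  rw [iter_eq α k t ht0]
  calc |lEval α L t| ≤ S * (1 + t) ^ (-1 - (k : ℝ) * (1 - α)) :=
      lEval_bound α L (inv_LL α hα0 hα1 k) ht
    _ ≤ (S + 1) * (1 + t) ^ (-1 - (k : ℝ) * (1 - α)) := by
      have := Real.rpow_nonneg h1t0.le (-1 - (k : ℝ) * (1 - α))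
      nlinarith
end
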